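/- Let H be a real Hilbert space, T : H → H a nonexpansive mapping with a fixed point y, λ : [0,∞) → [0,1] Lebesgue measurable, and x : [0,∞) → H a continuously differentiable solution of ẋ(t) = λ(t)(T(x(t)) − x(t)). Then for every t ≥ 0, (d/dt)‖x(t) − y‖² + λ(t)(1−λ(t))‖T(x(t)) − x(t)‖² + ‖ẋ(t)‖² ≤ 0. In particular, t ↦ ‖x(t) − y‖ is nonincreasing. -/

import Mathlib

open Filter MeasureTheory Set
open scoped RealInnerProductSpace

/-- Decrease of the distance to a fixed point along the continuous
Krasnosel'skiĭ–Mann dynamics `ẋ(t) = λ(t)(T(x(t)) − x(t))`. -/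
theorem stmt0
    {H : Type*} [NormedAddCommGroup H] [InnerProductSpace ℝ H]
    (T : H → H) (hT : ∀ a b : H, ‖T a - T b‖ ≤ ‖a - b‖)
    (y : H) (hy : T y = y)
    (lam : ℝ → ℝ) (hlam_meas : Measurable lam)
    (hlam : ∀ t ≥ (0:ℝ), lam t ∈ Icc (0:ℝ) 1)
    (x xd : ℝ → H) (x₀ : H) (hx0 : x 0 = x₀)
    (hx : ∀ t ≥ (0:ℝ), HasDerivAt x (xd t) t)
    (hode : ∀ t ≥ (0:ℝ), xd t = lam t • (T (x t) - x t)) :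
    (∀ t ≥ (0:ℝ), ∀ D : ℝ, HasDerivAt (fun s => ‖x s - y‖ ^ 2) D t →
      D + lam t * (1 - lam t) * ‖T (x t) - x t‖ ^ 2 + ‖xd t‖ ^ 2 ≤ 0) ∧
    AntitoneOn (fun t => ‖x t - y‖) (Ici 0) := by
  -- derivative of the squared distance
  have hderiv : ∀ t ≥ (0:ℝ),
      HasDerivAt (fun s => ‖x s - y‖ ^ 2) (2 * ⟪xd t, x t - y⟫) t := by
    intro t ht
    have h1 : HasDerivAt (fun s => x s - y) (xd t) t := (hx t ht).sub_const y
    have h2 := h1.inner ℝ h1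
    have : (fun s => ⟪x s - y, x s - y⟫) = fun s => ‖x s - y‖ ^ 2 := by
      funext s; rw [real_inner_self_eq_norm_sq]
    rw [this] at h2
    have e : ⟪x t - y, xd t⟫ + ⟪xd t, x t - y⟫ = 2 * ⟪xd t, x t - y⟫ := by
      rw [real_inner_comm]; ring
    exact h2.congr_deriv e
  -- the key inequality
  have key : ∀ t ≥ (0:ℝ),
      2 * ⟪xd t, x t - y⟫ + lam t * (1 - lam t) * ‖T (x t) - x t‖ ^ 2
        + ‖xd t‖ ^ 2 ≤ 0 := by
    intro t ht
    have hl := hlam t ht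
    have hfix : ‖(T (x t) - x t) + (x t - y)‖ ≤ ‖x t - y‖ := by
      have := hT (x t) y
      rw [hy] at this
      rw [sub_add_sub_cancel]
      exact this
    have hsq : ‖(T (x t) - x t) + (x t - y)‖ ^ 2 ≤ ‖x t - y‖ ^ 2 :=
      pow_le_pow_left₀ (norm_nonneg _) hfix 2
    rw [norm_add_sq_real] at hsq
    have hkey : ‖T (x t) - x t‖ ^ 2 + 2 * ⟪T (x t) - x t, x t - y⟫ ≤ 0 := by
      linarith
    rw [hode t ht, inner_smul_left, norm_smul]
    simp only [RCLike.conj_to_real, Real.norm_eq_abs]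
    have habs : |lam t| = lam t := abs_of_nonneg hl.1
    rw [habs]
    have h2 : lam t * (‖T (x t) - x t‖ ^ 2 + 2 * ⟪T (x t) - x t, x t - y⟫) ≤ 0 :=
      mul_nonpos_of_nonneg_of_nonpos hl.1 hkey
    have heq : 2 * (lam t * ⟪T (x t) - x t, x t - y⟫)
        + lam t * (1 - lam t) * ‖T (x t) - x t‖ ^ 2
        + (lam t * ‖T (x t) - x t‖) ^ 2
        = lam t * (‖T (x t) - x t‖ ^ 2 + 2 * ⟪T (x t) - x t, x t - y⟫) := by ring
    rw [heq]
    exact h2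
  constructor
  · intro t ht D hD
    have hDval : D = 2 * ⟪xd t, x t - y⟫ := hD.unique (hderiv t ht)
    rw [hDval]
    exact key t ht
  · -- first, the squared distance is antitone
    have hanti2 : AntitoneOn (fun t => ‖x t - y‖ ^ 2) (Ici 0) := by
      apply antitoneOn_of_deriv_nonpos (convex_Ici 0)
      · intro t ht
        exact (hderiv t ht).continuousAt.continuousWithinAt
      · intro t ht
        rw [interior_Ici] at ht
        exact (hderiv t (le_of_lt ht)).differentiableAt.differentiableWithinAt
      · intro t ht
        rw [interior_Ici] at ht
        rw [(hderiv t (le_of_lt ht)).deriv]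
        have := key t (le_of_lt ht)
        have hl := hlam t (le_of_lt ht)
        nlinarith [sq_nonneg (‖xd t‖), sq_nonneg (‖T (x t) - x t‖),
          mul_nonneg (mul_nonneg hl.1 (by linarith [hl.2] : (0:ℝ) ≤ 1 - lam t))
            (sq_nonneg (‖T (x t) - x t‖))]
    intro a ha b hb hab
    have := hanti2 ha hb hab
    simp only at this ⊢
    exact (pow_le_pow_iff_left₀ (norm_nonneg _) (norm_nonneg _) two_ne_zero).mp this
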